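/- Let T be a finite plane tree with T ≠ {∅}, and let ι : T∖{∅} → (rot T)° be the unique lexicographic-order-preserving bijection from the non-root vertices of T onto the internal vertices of rot T. Then for every u ∈ T∖{∅}, the height of ι(u) in rot T equals |u| − 1 + L(u). -/

import Mathlib

inductive PTree : Type
  | node : List PTree → PTree

namespace PTree

instance : Inhabited PTree := ⟨node []⟩

mutual
def size : PTree → ℕ
  | node ts => 1 + sizeList ts
def sizeList : List PTree → ℕ
  | [] => 0
  | t :: ts => size t + sizeList ts
end

def deg : PTree → ℕ
  | node ts => ts.length

mutual
def degreesAux : PTree → List ℕ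
  | node ts => ts.length :: degreesListAux ts
def degreesListAux : List PTree → List ℕ
  | [] => []
  | t :: ts => degreesAux t ++ degreesListAux ts
end

mutual
def heightsAux : PTree → ℕ → List ℕ
  | node ts, d => d :: heightsListAux ts (d + 1)
def heightsListAux : List PTree → ℕ → List ℕ
  | [], _ => []
  | t :: ts, d => heightsAux t d ++ heightsListAux ts d
end

mutual
def contourAux : PTree → ℕ → List ℕ
  | node ts, d => d :: contourListAux ts (d + 1)
def contourListAux : List PTree → ℕ → List ℕ
  | [], _ => []
  | t :: ts, d => contourAux t d ++ (d - 1) :: contourListAux ts d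
end

mutual
def verticesAux : PTree → List ℕ → List (List ℕ)
  | node ts, p => p :: verticesListAux ts p 0
def verticesListAux : List PTree → List ℕ → ℕ → List (List ℕ)
  | [], _, _ => []
  | t :: ts, p, i => verticesAux t (p ++ [i]) ++ verticesListAux ts p (i + 1)
end

def vertices (T : PTree) : List (List ℕ) := verticesAux T []

/-- Height process of a plane tree. -/
def H (T : PTree) (k : ℕ) : ℕ := (heightsAux T 0).getD k 0

/-- Contour process of a plane tree. -/
def C (T : PTree) (k : ℕ) : ℕ := (contourAux T 0).getD k 0

/-- Łukasiewicz walk of a plane tree. -/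
def S (T : PTree) (k : ℕ) : ℤ :=
  (((degreesAux T).take k).map (fun d => (d : ℤ) - 1)).sum

def subtreeAt : List ℕ → PTree → Option PTree
  | [], t => some t
  | i :: p, node ts => (ts[i]?).bind (subtreeAt p)

def isInternal (T : PTree) (p : List ℕ) : Bool :=
  match subtreeAt p T with
  | some (node (_ :: _)) => true
  | _ => false

def isVertex (T : PTree) (p : List ℕ) : Bool := (subtreeAt p T).isSome

def rot : PTree → PTree
  | node [] => node []
  | node (t :: ts) => node [rot t, rot (node ts)]

mutual
def corot : PTree → PTree
  | node ts => corotAux ts (node [])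
def corotAux : List PTree → PTree → PTree
  | [], acc => acc
  | t :: ts, acc => corotAux ts (node [acc, corot t])
end

mutual
def mirror : PTree → PTree
  | node ts => node (mirrorList ts)
def mirrorList : List PTree → List PTree
  | [] => []
  | t :: ts => mirrorList ts ++ [mirror t]
end

mutual
def internalTree : PTree → PTree
  | node ts => node (internalList ts)
def internalList : List PTree → List PTree
  | [] => []
  | node [] :: ts => internalList ts
  | t :: ts => internalTree t :: internalList ts
end

def mirrorPath : PTree → List ℕ → List ℕ
  | _, [] => []
  | node ts, i :: p =>
      (ts.length - 1 - i) ::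
        (match ts[i]? with
         | some t => mirrorPath t p
         | none => p)

def lexLt : List ℕ → List ℕ → Bool
  | _, [] => false
  | [], _ :: _ => true
  | a :: as, b :: bs => if a < b then true else if a = b then lexLt as bs else false

def nonRootVertices (T : PTree) : List (List ℕ) := (vertices T).tail

def internalVertices (T : PTree) : List (List ℕ) :=
  (vertices T).filter (fun p => isInternal T p)

/-- the order-preserving identification between non-root vertices of `T` and
internal vertices of `rot T`. -/
def iota (T : PTree) (u : List ℕ) : List ℕ :=
  (internalVertices (rot T)).getD ((nonRootVertices T).idxOf u) []

/-- `L(u)`: number of edges grafted on the left of the ancestral line of `u`. -/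
def Lnum (T : PTree) (u : List ℕ) : ℕ :=
  ((vertices T).filter (fun w =>
      !w.isEmpty && (w.dropLast.isPrefixOf u && w.dropLast != u)
        && !(w.isPrefixOf u && w != u) && lexLt w u)).length

/-- mirrored enumeration of `T`. -/
def mirroredEnum (T : PTree) (k : ℕ) : List ℕ :=
  mirrorPath (mirror T) ((vertices (mirror T)).getD k [])

def descendR (T : PTree) : ℕ → List ℕ → List ℕ
  | 0, p => p
  | fuel + 1, p => if isInternal T (p ++ [1]) then descendR T fuel (p ++ [1]) else p

def ascend (visited : List (List ℕ)) : ℕ → List ℕ → List ℕ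
  | 0, p => p.dropLast
  | fuel + 1, p => if p.dropLast ∈ visited then ascend visited fuel p.dropLast else p.dropLast

def rightmostSeq (T : PTree) : ℕ → List (List ℕ)
  | 0 => []
  | k + 1 =>
      let prev := rightmostSeq T k
      let next :=
        match prev.getLast? with
        | none => descendR T (size T) []
        | some p =>
            if isInternal T (p ++ [0]) then descendR T (size T) (p ++ [0])
            else ascend prev (size T) p
      prev ++ [next]

def Hstar (T : PTree) (k : ℕ) : ℤ :=
  if k = 0 ∨ size T ≤ k then 0 else ((iota T (mirroredEnum T k)).length : ℤ)

end PTree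

open PTree

namespace PTree

def shif : List ℕ → List ℕ
  | [] => []
  | a :: p => (a+1) :: p

mutual
theorem verticesAux_map : ∀ (t : PTree) (p : List ℕ),
    verticesAux t p = (verticesAux t []).map (p ++ ·)
  | node ts, p => by
    rw [verticesAux, verticesAux, verticesListAux_map ts p 0]
    simp
theorem verticesListAux_map : ∀ (ts : List PTree) (p : List ℕ) (i : ℕ),
    verticesListAux ts p i = (verticesListAux ts [] i).map (p ++ ·)
  | [], p, i => by rw [verticesListAux, verticesListAux]; rfl
  | t :: ts, p, i => by
    rw [verticesListAux, verticesListAux, verticesAux_map t (p ++ [i]),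
      verticesAux_map t ([] ++ [i]), verticesListAux_map ts p (i+1),
      verticesListAux_map ts [] (i+1)]
    simp [Function.comp_def]
end

theorem vLA_shift : ∀ (ts : List PTree) (i : ℕ),
    verticesListAux ts [] (i+1) = (verticesListAux ts [] i).map shif
  | [], i => by rw [verticesListAux, verticesListAux]; rfl
  | t :: ts, i => by
    rw [verticesListAux, verticesListAux, verticesAux_map t ([] ++ [i+1]),
      verticesAux_map t ([] ++ [i]), vLA_shift ts (i+1)]
    simp [Function.comp_def, shif]

theorem vertices_node (ts : List PTree) :
    vertices (node ts) = [] :: verticesListAux ts [] 0 := by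
  rw [vertices, verticesAux]

theorem nonRoot_node (ts : List PTree) :
    nonRootVertices (node ts) = verticesListAux ts [] 0 := by
  rw [nonRootVertices, vertices_node, List.tail_cons]

theorem vertices_eq (T : PTree) : vertices T = [] :: nonRootVertices T := by
  cases T with
  | node ts => rw [nonRoot_node, vertices_node]

theorem vertices_cons (t : PTree) (ts : List PTree) :
    vertices (node (t :: ts)) =
      [] :: ((vertices t).map (0 :: ·) ++ (nonRootVertices (node ts)).map shif) := by
  rw [vertices_node, verticesListAux, verticesAux_map t ([] ++ [0]), vLA_shift ts 0,
    nonRoot_node, vertices]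
  simp

theorem ne_nil_of_mem_vLA : ∀ (ts : List PTree) (i : ℕ) (w : List ℕ),
    w ∈ verticesListAux ts [] i → w ≠ []
  | t :: ts, i, w, hw => by
    rw [verticesListAux, verticesAux_map t ([] ++ [i])] at hw
    rcases List.mem_append.1 hw with h | h
    · obtain ⟨x, -, rfl⟩ := List.mem_map.1 h
      simp
    · exact ne_nil_of_mem_vLA ts (i+1) w h

theorem ne_nil_of_mem_nonRoot {T : PTree} {w : List ℕ}
    (hw : w ∈ nonRootVertices T) : w ≠ [] := by
  cases T with
  | node ts => rw [nonRoot_node] at hw; exact ne_nil_of_mem_vLA ts 0 w hw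

mutual
theorem length_verticesAux : ∀ (t : PTree) (p : List ℕ),
    (verticesAux t p).length = size t
  | node ts, p => by
    rw [verticesAux, size, List.length_cons, length_vLA ts p 0]
    omega
theorem length_vLA : ∀ (ts : List PTree) (p : List ℕ) (i : ℕ),
    (verticesListAux ts p i).length = sizeList ts
  | [], p, i => by rw [verticesListAux, sizeList]; rfl
  | t :: ts, p, i => by
    rw [verticesListAux, sizeList, List.length_append,
      length_verticesAux t (p ++ [i]), length_vLA ts p (i+1)]
end

theorem length_vertices (T : PTree) : (vertices T).length = size T :=
  length_verticesAux T []

theorem size_pos (t : PTree) : 1 ≤ size t := by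
  cases t with
  | node ts => rw [size]; omega

theorem length_nonRoot (T : PTree) : (nonRootVertices T).length = size T - 1 := by
  have := length_vertices T
  rw [vertices_eq] at this
  simp at this
  omega

theorem rec2 {P : PTree → Prop} (h0 : P (node []))
    (h1 : ∀ t ts, P t → P (node ts) → P (node (t :: ts))) : ∀ T, P T
  | node [] => h0
  | node (t :: ts) => h1 t ts (rec2 h0 h1 t) (rec2 h0 h1 (node ts))

theorem subtreeAt_pair_zero (A B : PTree) (p : List ℕ) :
    subtreeAt (0 :: p) (node [A, B]) = subtreeAt p A := by
  rw [subtreeAt]; rfl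

theorem subtreeAt_pair_one (A B : PTree) (p : List ℕ) :
    subtreeAt (1 :: p) (node [A, B]) = subtreeAt p B := by
  rw [subtreeAt]; rfl

theorem isInternal_pair_zero (A B : PTree) (p : List ℕ) :
    isInternal (node [A, B]) (0 :: p) = isInternal A p := by
  simp only [isInternal, subtreeAt_pair_zero]

theorem isInternal_pair_one (A B : PTree) (p : List ℕ) :
    isInternal (node [A, B]) (1 :: p) = isInternal B p := by
  simp only [isInternal, subtreeAt_pair_one]

theorem IV_nil : internalVertices (node []) = [] := by
  rw [internalVertices, vertices_node, verticesListAux]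
  simp [isInternal, subtreeAt]

theorem vertices_pair (A B : PTree) :
    vertices (node [A, B]) = [] :: ((vertices A).map (0 :: ·) ++ (vertices B).map (1 :: ·)) := by
  rw [vertices_cons, nonRoot_node, verticesListAux, verticesListAux,
    verticesAux_map B ([] ++ [0])]
  simp [Function.comp_def, shif, vertices]

theorem IV_pair (A B : PTree) :
    internalVertices (node [A, B]) =
      [] :: ((internalVertices A).map (0 :: ·) ++ (internalVertices B).map (1 :: ·)) := by
  rw [internalVertices, vertices_pair, List.filter_cons]
  have h0 : isInternal (node [A, B]) [] = true := by
    rw [isInternal, subtreeAt]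
  rw [h0]
  rw [List.filter_append, List.filter_map, List.filter_map]
  have e0 : List.filter ((fun p => isInternal (node [A, B]) p) ∘ fun x => 0 :: x)
      (vertices A) = internalVertices A := by
    rw [internalVertices]
    exact List.filter_congr (fun x _ => isInternal_pair_zero A B x)
  have e1 : List.filter ((fun p => isInternal (node [A, B]) p) ∘ fun x => 1 :: x)
      (vertices B) = internalVertices B := by
    rw [internalVertices]
    exact List.filter_congr (fun x _ => isInternal_pair_one A B x)
  rw [e0, e1]
  rfl

theorem length_IV_rot : ∀ T : PTree, (internalVertices (rot T)).length = size T - 1 := by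
  refine rec2 ?_ ?_
  · rw [rot, IV_nil]
    simp [size, sizeList]
  · intro t ts IH1 IH2
    rw [rot, IV_pair]
    simp only [List.length_cons, List.length_append, List.length_map, IH1, IH2]
    have h1 := size_pos t
    have h2 : size (node ts) = 1 + sizeList ts := by simp [size]
    have h3 : size (node (t :: ts)) = 1 + (size t + sizeList ts) := by
      simp [size, sizeList]
    omega

def Q (u : List ℕ) : List ℕ → Bool := fun w =>
  !w.isEmpty && (w.dropLast.isPrefixOf u && w.dropLast != u)
    && !(w.isPrefixOf u && w != u) && lexLt w u

theorem Lnum_eq (T : PTree) (u : List ℕ) :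
    Lnum T u = (vertices T).countP (Q u) := by
  rw [Lnum, List.countP_eq_length_filter]; rfl

theorem lexLt_nil_right (l : List ℕ) : lexLt l [] = false := by
  cases l <;> rw [lexLt]

theorem lexLt_cons_iff {a b : ℕ} {as bs : List ℕ} :
    lexLt (a :: as) (b :: bs) = true ↔ (a < b ∨ (a = b ∧ lexLt as bs = true)) := by
  rw [lexLt]
  by_cases h1 : a < b
  · simp [h1]
  · by_cases h2 : a = b <;> simp [h1, h2]

theorem Q_nil (u : List ℕ) : Q u [] = false := by simp [Q]

theorem Q_single_zero (w' : List ℕ) : Q [0] (0 :: w') = false := by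
  rcases w' with _ | ⟨c, w''⟩ <;>
  · rw [Bool.eq_iff_iff]
    simp [Q, lexLt_cons_iff, lexLt_nil_right, List.isPrefixOf_iff_prefix,
      List.cons_prefix_cons, Bool.eq_false_iff, bne_iff_ne, List.dropLast_cons₂,
      List.prefix_nil]

theorem Q_zero_zero (u' : List ℕ) (hu : u' ≠ []) (w' : List ℕ) :
    Q (0 :: u') (0 :: w') = Q u' w' := by
  rcases w' with _ | ⟨c, w''⟩ <;>
  · rw [Bool.eq_iff_iff]
    simp [Q, lexLt_cons_iff, lexLt_nil_right, List.isPrefixOf_iff_prefix,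
      List.cons_prefix_cons, Bool.eq_false_iff, bne_iff_ne, List.dropLast_cons₂,
      List.prefix_nil, hu]

theorem Q_zero_shift (u' v : List ℕ) (hv : v ≠ []) :
    Q (0 :: u') (shif v) = false := by
  rcases v with _ | ⟨a, v'⟩
  · exact absurd rfl hv
  · rw [shif, Bool.eq_iff_iff]
    simp [Q, lexLt_cons_iff]

theorem Q_succ_zero (j : ℕ) (u' w' : List ℕ) :
    Q ((j+1) :: u') (0 :: w') = decide (w' = []) := by
  rcases w' with _ | ⟨c, w''⟩ <;>
  · rw [Bool.eq_iff_iff]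
    simp [Q, lexLt_cons_iff, lexLt_nil_right, List.isPrefixOf_iff_prefix,
      List.cons_prefix_cons, Bool.eq_false_iff, bne_iff_ne, List.dropLast_cons₂,
      List.prefix_nil]

theorem Q_succ_shift (j : ℕ) (u' v : List ℕ) (hv : v ≠ []) :
    Q ((j+1) :: u') (shif v) = Q (j :: u') v := by
  rcases v with _ | ⟨a, v'⟩
  · exact absurd rfl hv
  rw [shif]
  rcases v' with _ | ⟨c, v''⟩ <;>
  · rw [Bool.eq_iff_iff]
    simp [Q, lexLt_cons_iff, lexLt_nil_right, List.isPrefixOf_iff_prefix,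
      List.cons_prefix_cons, Bool.eq_false_iff, bne_iff_ne, List.dropLast_cons₂,
      List.prefix_nil]


theorem countP_nil_vertices (t : PTree) :
    (vertices t).countP (fun w => decide (w = [])) = 1 := by
  rw [vertices_eq, List.countP_cons]
  have h : (nonRootVertices t).countP (fun w => decide (w = [])) = 0 :=
    List.countP_eq_zero.2 (fun w hw => by simp [ne_nil_of_mem_nonRoot hw])
  rw [h]
  simp

theorem Lnum_nonRoot (T : PTree) (u : List ℕ) :
    Lnum T u = (nonRootVertices T).countP (Q u) := by
  rw [Lnum_eq, vertices_eq, List.countP_cons, Q_nil]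
  simp


theorem nonRoot_cons (t : PTree) (ts : List PTree) :
    nonRootVertices (node (t :: ts)) =
      (vertices t).map (0 :: ·) ++ (nonRootVertices (node ts)).map shif := by
  rw [nonRootVertices, vertices_cons, List.tail_cons]

theorem Lnum_single (t : PTree) (ts : List PTree) :
    Lnum (node (t :: ts)) [0] = 0 := by
  rw [Lnum_nonRoot, nonRoot_cons, List.countP_append, List.countP_map,
    List.countP_map]
  have h1 : (vertices t).countP ((Q [0]) ∘ (fun x => 0 :: x)) = 0 :=
    List.countP_eq_zero.2 (fun w _ => by simp [Function.comp, Q_single_zero])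
  have h2 : (nonRootVertices (node ts)).countP ((Q [0]) ∘ shif) = 0 :=
    List.countP_eq_zero.2 (fun w hw => by
      simp [Function.comp, Q_zero_shift [] w (ne_nil_of_mem_nonRoot hw)])
  rw [h1, h2]

theorem Lnum_cons_zero (t : PTree) (ts : List PTree) (u' : List ℕ) (hu : u' ≠ []) :
    Lnum (node (t :: ts)) (0 :: u') = Lnum t u' := by
  rw [Lnum_nonRoot, nonRoot_cons, List.countP_append, List.countP_map,
    List.countP_map]
  have h1 : (vertices t).countP ((Q (0 :: u')) ∘ (fun x => 0 :: x))
      = (vertices t).countP (Q u') :=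
    List.countP_congr (fun w _ => by simp [Function.comp, Q_zero_zero u' hu w])
  have h2 : (nonRootVertices (node ts)).countP ((Q (0 :: u')) ∘ shif) = 0 :=
    List.countP_eq_zero.2 (fun w hw => by
      simp [Function.comp, Q_zero_shift u' w (ne_nil_of_mem_nonRoot hw)])
  rw [h1, h2, Lnum_eq]
  simp

theorem Lnum_cons_succ (t : PTree) (ts : List PTree) (j : ℕ) (u' : List ℕ) :
    Lnum (node (t :: ts)) ((j+1) :: u') = 1 + Lnum (node ts) (j :: u') := by
  rw [Lnum_nonRoot, nonRoot_cons, List.countP_append, List.countP_map,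
    List.countP_map]
  have h1 : (vertices t).countP ((Q ((j+1) :: u')) ∘ (fun x => 0 :: x))
      = (vertices t).countP (fun w => decide (w = [])) :=
    List.countP_congr (fun w _ => by simp [Function.comp, Q_succ_zero j u' w])
  have h2 : (nonRootVertices (node ts)).countP ((Q ((j+1) :: u')) ∘ shif)
      = (nonRootVertices (node ts)).countP (Q (j :: u')) :=
    List.countP_congr (fun w hw => by
      simp [Function.comp, Q_succ_shift j u' w (ne_nil_of_mem_nonRoot hw)])
  rw [h1, h2, countP_nil_vertices, Lnum_nonRoot]

theorem instEq : (List.instBEq : BEq (List ℕ)) = instBEqOfDecidableEq := by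
  have h : ∀ (i1 i2 : BEq (List ℕ)),
      (∀ x y : List ℕ, @BEq.beq _ i1 x y = @BEq.beq _ i2 x y) → i1 = i2 := by
    rintro ⟨f⟩ ⟨g⟩ h
    have : f = g := by funext x y; exact h x y
    rw [this]
  refine h _ _ (fun x y => ?_)
  by_cases hxy : x = y <;> simp [hxy]

theorem indexOf_inst (a : List ℕ) (l : List (List ℕ)) :
    @List.idxOf (List ℕ) List.instBEq a l
      = @List.idxOf (List ℕ) instBEqOfDecidableEq a l := by
  rw [instEq]

theorem indexOf_map_inj {α : Type*} [DecidableEq α] {f : α → α} {l : List α} {a : α}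
    (h : ∀ x ∈ l, f x = f a → x = a) : (l.map f).idxOf (f a) = l.idxOf a := by
  induction l with
  | nil => rfl
  | cons x l IH =>
    by_cases hx : x = a
    · subst hx; rw [List.map_cons, List.idxOf_cons_self, List.idxOf_cons_self]
    · rw [List.map_cons, List.idxOf_cons_ne _ (fun he => hx (h x (by simp) he)),
        List.idxOf_cons_ne _ hx, IH (fun y hy => h y (by simp [hy]))]

theorem iota_single (t : PTree) (ts : List PTree) : iota (node (t :: ts)) [0] = [] := by
  have hidx : (nonRootVertices (node (t :: ts))).idxOf [0] = 0 := by
    simp only [indexOf_inst]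
    rw [nonRoot_cons, vertices_eq t, List.map_cons, List.cons_append]
    rw [← indexOf_inst]; exact List.idxOf_cons_self
  rw [iota, hidx, rot, IV_pair, List.getD_cons_zero]

theorem iota_cons_zero (t : PTree) (ts : List PTree) (u' : List ℕ)
    (hu : u' ∈ vertices t) (hne : u' ≠ []) :
    iota (node (t :: ts)) (0 :: u') = 0 :: iota t u' := by
  have hmem : u' ∈ nonRootVertices t := by
    rw [vertices_eq] at hu
    rcases List.mem_cons.1 hu with h | h
    · exact absurd h hne
    · exact h
  have hilt : (nonRootVertices t).idxOf u' < (nonRootVertices t).length := by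
    simp only [indexOf_inst]
    rw [← indexOf_inst]; exact List.idxOf_lt_length_iff.2 hmem
  have hidx : (nonRootVertices (node (t :: ts))).idxOf (0 :: u')
      = (nonRootVertices t).idxOf u' + 1 := by
    simp only [indexOf_inst]
    rw [nonRoot_cons, ← indexOf_inst, List.idxOf_append_of_mem (List.mem_map_of_mem (f := fun x => 0 :: x) hu), indexOf_inst]
    have e1 : @List.idxOf (List ℕ) instBEqOfDecidableEq (0 :: u')
        ((vertices t).map (fun x => 0 :: x))
        = @List.idxOf (List ℕ) instBEqOfDecidableEq u' (vertices t) :=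
      indexOf_map_inj (f := fun x => 0 :: x) (a := u') (l := vertices t)
        (fun x _ hx => by simpa using hx)
    rw [e1, vertices_eq t, ← indexOf_inst, List.idxOf_cons_ne _ (Ne.symm hne), indexOf_inst]
  have hlen : (nonRootVertices t).idxOf u' < (internalVertices (rot t)).length := by
    rw [length_IV_rot, ← length_nonRoot]; exact hilt
  rw [iota, hidx, rot, IV_pair, List.getD_cons_succ, List.getD_eq_getElem?_getD,
    List.getElem?_append, if_pos (by simpa using hlen), List.getElem?_map,
    List.getElem?_eq_getElem hlen]
  simp [iota, List.getD_eq_getElem?_getD, List.getElem?_eq_getElem hlen]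

theorem iota_cons_succ (t : PTree) (ts : List PTree) (j : ℕ) (u' : List ℕ)
    (h : (j :: u') ∈ nonRootVertices (node ts)) :
    iota (node (t :: ts)) ((j+1) :: u') = 1 :: iota (node ts) (j :: u') := by
  have hilt : (nonRootVertices (node ts)).idxOf (j :: u')
      < (nonRootVertices (node ts)).length := by
    simp only [indexOf_inst]
    rw [← indexOf_inst]; exact List.idxOf_lt_length_iff.2 h
  have hnotmem : ((j+1) :: u') ∉ (vertices t).map (fun x => 0 :: x) := by
    intro hc
    obtain ⟨x, -, hx⟩ := List.mem_map.1 hc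
    simp only [List.cons.injEq] at hx
    omega
  have hidx : (nonRootVertices (node (t :: ts))).idxOf ((j+1) :: u')
      = (vertices t).length + (nonRootVertices (node ts)).idxOf (j :: u') := by
    simp only [indexOf_inst]
    rw [nonRoot_cons, ← indexOf_inst, List.idxOf_append_of_notMem hnotmem, indexOf_inst, List.length_map]
    congr 1
    have e1 : @List.idxOf (List ℕ) instBEqOfDecidableEq (shif (j :: u'))
        ((nonRootVertices (node ts)).map shif)
        = @List.idxOf (List ℕ) instBEqOfDecidableEq (j :: u')
          (nonRootVertices (node ts)) := by
      refine indexOf_map_inj (f := shif) (fun x hx hsx => ?_)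
      rcases x with _ | ⟨a, p⟩
      · exact absurd rfl (ne_nil_of_mem_nonRoot hx)
      · rw [shif, shif] at hsx
        simp only [List.cons.injEq] at hsx ⊢
        exact ⟨by omega, hsx.2⟩
    exact e1
  have hAlen : ((internalVertices (rot t)).map (fun x => 0 :: x)).length = size t - 1 := by
    rw [List.length_map, length_IV_rot]
  have hlen : (nonRootVertices (node ts)).idxOf (j :: u')
      < (internalVertices (rot (node ts))).length := by
    rw [length_IV_rot, ← length_nonRoot]; exact hilt
  have hst := size_pos t
  have hsplit : (vertices t).length + (nonRootVertices (node ts)).idxOf (j :: u')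
      = (size t - 1 + (nonRootVertices (node ts)).idxOf (j :: u')) + 1 := by
    rw [length_vertices]; omega
  rw [iota, hidx, rot, IV_pair, hsplit, List.getD_cons_succ, List.getD_eq_getElem?_getD,
    List.getElem?_append, if_neg (by rw [hAlen]; omega)]
  rw [hAlen, show size t - 1 + (nonRootVertices (node ts)).idxOf (j :: u') - (size t - 1)
    = (nonRootVertices (node ts)).idxOf (j :: u') from by omega]
  rw [List.getElem?_map, List.getElem?_eq_getElem hlen]
  simp [iota, List.getD_eq_getElem?_getD, List.getElem?_eq_getElem hlen]

theorem main : ∀ T : PTree, ∀ u ∈ vertices T, u ≠ [] →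
    (iota T u).length = u.length - 1 + Lnum T u := by
  refine rec2 ?_ ?_
  · intro u hu hne
    rw [vertices_node, verticesListAux] at hu
    rcases List.mem_cons.1 hu with h | h
    · exact absurd h hne
    · simp at h
  · intro t ts IH1 IH2 u hu hne
    rw [vertices_cons] at hu
    rcases List.mem_cons.1 hu with rfl | hu'
    · exact absurd rfl hne
    rcases List.mem_append.1 hu' with h | h
    · obtain ⟨u', hu'mem, rfl⟩ := List.mem_map.1 h
      by_cases h0 : u' = []
      · subst h0
        rw [iota_single, Lnum_single]
        rfl
      · rw [iota_cons_zero t ts u' hu'mem h0, Lnum_cons_zero t ts u' h0]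
        have hIH := IH1 u' hu'mem h0
        have hlen : 1 ≤ u'.length := List.length_pos_iff.2 h0
        simp only [List.length_cons] at hIH ⊢
        omega
    · obtain ⟨v, hv, rfl⟩ := List.mem_map.1 h
      have hvne : v ≠ [] := ne_nil_of_mem_nonRoot hv
      obtain ⟨j, u', rfl⟩ : ∃ j u', v = j :: u' := by
        rcases v with _ | ⟨j, u'⟩
        · exact absurd rfl hvne
        · exact ⟨j, u', rfl⟩
      rw [show shif (j :: u') = (j+1) :: u' from rfl, iota_cons_succ t ts j u' hv,
        Lnum_cons_succ]
      have hm : (j :: u') ∈ vertices (node ts) := by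
        rw [vertices_eq]; exact List.mem_cons_of_mem _ hv
      have hIH := IH2 (j :: u') hm (by simp)
      simp only [List.length_cons] at hIH ⊢
      omega

end PTree

-- STATEMENT 9
theorem stmt9 (T : PTree) (hT : T ≠ .node []) (u : List ℕ)
    (hu : u ∈ vertices T) (hne : u ≠ []) :
    (iota T u).length = u.length - 1 + Lnum T u := by
  exact PTree.main T u hu hne
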